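/- There is a constant C₀ > 0, depending only on κ₂ = sup_x ‖∇²f(x)‖, with the following property. Let x₀ be a point with f(x₀) > 0 and suppose ε > 0 is small enough that along every Max Shift sequence with parameter ε started at x₀ all shifts except possibly the last have size exactly ε. Then for every such sequence (x_k) and every index k with ∇f(x_k) ≠ 0, except possibly the last shift, ‖(x_{k+1} − x_k) − ε·∇f(x_k)/‖∇f(x_k)‖‖ ≤ C₀·ε^{3/2}/‖∇f(x_k)‖^{1/2}. -/

import Mathlib

open Metric Set Filter MeasureTheory Topology
open scoped Topology RealInnerProductSpace

abbrev Euc (d : ℕ) := EuclideanSpace ℝ (Fin d)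

/-- The Hessian of `f`, as the derivative of the gradient field. -/
noncomputable def hess {d : ℕ} (f : Euc d → ℝ) (x : Euc d) : Euc d →L[ℝ] Euc d :=
  fderiv ℝ (gradient f) x

/-- The standing assumptions on the density `f`: nonnegative, integrable, vanishing at
infinity, twice differentiable with bounded and uniformly continuous zeroth, first and
second derivatives, and Morse (nonsingular Hessian at every critical point). -/
def IsNiceDensity {d : ℕ} (f : Euc d → ℝ) : Prop :=
  (∀ x, 0 ≤ f x) ∧
  Integrable f volume ∧
  Tendsto f (cocompact (Euc d)) (𝓝 0) ∧
  Differentiable ℝ f ∧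
  Differentiable ℝ (gradient f) ∧
  (∃ M, ∀ x, |f x| ≤ M) ∧
  (∃ M, ∀ x, ‖gradient f x‖ ≤ M) ∧
  (∃ M, ∀ x, ‖hess f x‖ ≤ M) ∧
  UniformContinuous f ∧
  UniformContinuous (gradient f) ∧
  UniformContinuous (hess f) ∧
  (∀ x, gradient f x = 0 → Function.Bijective (hess f x))

/-- `γ` is the gradient ascent curve of `f` starting at `x`, defined on `[0, ∞)`. -/
def IsGradFlow {d : ℕ} (f : Euc d → ℝ) (x : Euc d) (γ : ℝ → Euc d) : Prop :=
  γ 0 = x ∧ ∀ t ∈ Ici (0:ℝ), HasDerivWithinAt γ (gradient f (γ t)) (Ici 0) t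

/-- A Max Shift sequence with parameter `ε` started at `x₀`: each point maximizes `f` over the
closed ball of radius `ε` around the previous point, and the sequence becomes constant as soon
as the density value stops strictly increasing. -/
def IsMaxShiftSeq {d : ℕ} (f : Euc d → ℝ) (ε : ℝ) (x₀ : Euc d) (x : ℕ → Euc d) : Prop :=
  x 0 = x₀ ∧ ∀ k : ℕ,
    x (k+1) ∈ closedBall (x k) ε ∧
    (∀ y ∈ closedBall (x k) ε, f y ≤ f (x (k+1))) ∧
    (f (x (k+1)) = f (x k) → ∀ m, k + 1 ≤ m → x m = x (k+1))

lemma taylor_bound {d : ℕ} (f : Euc d → ℝ) (hdiff : Differentiable ℝ f)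
    (hdg : Differentiable ℝ (gradient f)) (M : ℝ) (hM : ∀ x, ‖hess f x‖ ≤ M)
    (x h : Euc d) :
    |f (x + h) - f x - ⟪gradient f x, h⟫| ≤ M * ‖h‖ ^ 2 := by
  have hM0 : 0 ≤ M := le_trans (norm_nonneg _) (hM x)
  have hlip : LipschitzWith M.toNNReal (gradient f) := by
    apply lipschitzWith_of_nnnorm_fderiv_le hdg
    intro y
    rw [← NNReal.coe_le_coe, coe_nnnorm, Real.coe_toNNReal _ hM0]
    exact hM y
  set g := gradient f x with hg
  set ψ : ℝ → ℝ := fun t => f (x + t • h) - t * ⟪g, h⟫ with hψ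
  have hder : ∀ t : ℝ, HasDerivAt ψ (⟪gradient f (x + t • h), h⟫ - ⟪g, h⟫) t := by
    intro t
    have h1 : HasDerivAt (fun t : ℝ => x + t • h) h t := by
      simpa using ((hasDerivAt_id t).smul_const h).const_add x
    have h2 := ((hdiff (x + t • h)).hasGradientAt.hasFDerivAt.comp_hasDerivAt t h1)
    have h3 := h2.sub ((hasDerivAt_id t).mul_const ⟪g, h⟫)
    rw [InnerProductSpace.toDual_apply_apply, one_mul] at h3
    exact h3
  have hbound : ∀ t ∈ Icc (0:ℝ) 1, ‖⟪gradient f (x + t • h), h⟫ - ⟪g, h⟫‖ ≤ M * ‖h‖ ^ 2 := by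
    intro t ht
    have h3 : ⟪gradient f (x + t • h), h⟫ - ⟪g, h⟫ = ⟪gradient f (x + t • h) - g, h⟫ := by
      rw [inner_sub_left]
    rw [h3]
    calc ‖⟪gradient f (x + t • h) - g, h⟫‖ ≤ ‖gradient f (x + t • h) - g‖ * ‖h‖ :=
          norm_inner_le_norm _ _
      _ ≤ (M * ‖t • h‖) * ‖h‖ := by
          apply mul_le_mul_of_nonneg_right _ (norm_nonneg h)
          have := hlip.dist_le_mul (x + t • h) x
          simpa [dist_eq_norm, Real.coe_toNNReal _ hM0] using this
      _ ≤ M * ‖h‖ ^ 2 := by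
          rw [norm_smul]
          have ht1 : ‖t‖ ≤ 1 := by
            rw [Real.norm_eq_abs, abs_of_nonneg ht.1]; exact ht.2
          have h4 : ‖t‖ * ‖h‖ ≤ 1 * ‖h‖ := mul_le_mul_of_nonneg_right ht1 (norm_nonneg h)
          calc M * (‖t‖ * ‖h‖) * ‖h‖ ≤ M * (1 * ‖h‖) * ‖h‖ :=
                mul_le_mul_of_nonneg_right (mul_le_mul_of_nonneg_left h4 hM0) (norm_nonneg h)
            _ = M * ‖h‖ ^ 2 := by ring
  have key := (convex_Icc (0:ℝ) 1).norm_image_sub_le_of_norm_hasDerivWithin_le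
    (fun t _ => (hder t).hasDerivWithinAt) hbound (left_mem_Icc.2 zero_le_one)
    (right_mem_Icc.2 zero_le_one)
  have : ψ 1 - ψ 0 = f (x + h) - f x - ⟪g, h⟫ := by simp [hψ]; ring
  simpa [this] using key

/-- There is a constant `C₀ > 0` (depending only on `κ₂ = sup ‖∇²f‖`) such
that whenever `ε` is small enough that all shifts of Max Shift sequences started at `x₀`
(except possibly the last) have size exactly `ε`, every shift is within
`C₀ ε^{3/2} / ‖∇f(x_k)‖^{1/2}` of `ε` times the normalized gradient. -/
theorem maxShift_shift_close_to_gradient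
    {d : ℕ} (hd : 0 < d) (f : Euc d → ℝ) (hf : IsNiceDensity f) :
    ∃ C₀ > (0:ℝ),
      ∀ x₀ : Euc d, 0 < f x₀ → ∀ ε > (0:ℝ),
        (∀ x : ℕ → Euc d, IsMaxShiftSeq f ε x₀ x →
          ∀ k : ℕ, (¬ ∀ m, k + 1 ≤ m → x m = x (k+1)) → ‖x (k+1) - x k‖ = ε) →
        ∀ x : ℕ → Euc d, IsMaxShiftSeq f ε x₀ x →
          ∀ k : ℕ, gradient f (x k) ≠ 0 → (¬ ∀ m, k + 1 ≤ m → x m = x (k+1)) →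
            ‖(x (k+1) - x k) - (ε / ‖gradient f (x k)‖) • gradient f (x k)‖ ≤
              C₀ * ε ^ ((3:ℝ)/2) / ‖gradient f (x k)‖ ^ ((1:ℝ)/2) := by
  obtain ⟨_, _, _, hdiff, hdg, _, _, ⟨M, hM⟩, _⟩ := hf
  have hM0 : 0 ≤ M := le_trans (norm_nonneg _) (hM 0)
  refine ⟨2 * Real.sqrt M + 1, by positivity, ?_⟩
  set C₀ := 2 * Real.sqrt M + 1 with hC₀
  have hC₀pos : 0 < C₀ := by positivity
  have hC2 : 4 * M ≤ C₀ ^ 2 := by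
    have hs : Real.sqrt M ^ 2 = M := Real.sq_sqrt hM0
    nlinarith [Real.sqrt_nonneg M]
  intro x₀ hx₀ ε hε hshift x hx k hgrad hlast
  set g := gradient f (x k) with hgdef
  have hG : 0 < ‖g‖ := norm_pos_iff.2 hgrad
  set G := ‖g‖ with hGdef
  set u := x (k+1) - x k with hu
  have hun : ‖u‖ = ε := hshift x hx k hlast
  set v := (ε / G) • g with hv
  have hvn : ‖v‖ = ε := by
    rw [hv, norm_smul, Real.norm_eq_abs, abs_of_pos (div_pos hε hG)]
    field_simp
    exact hGdef.symm
  have hball : x k + v ∈ closedBall (x k) ε := by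
    rw [mem_closedBall, dist_eq_norm]
    simp [hvn]
  have hle : f (x k + v) ≤ f (x (k+1)) := (hx.2 k).2.1 _ hball
  have T1 := taylor_bound f hdiff hdg M hM (x k) v
  have T2 := taylor_bound f hdiff hdg M hM (x k) u
  rw [hvn] at T1
  rw [hun] at T2
  have hxk1 : x k + u = x (k+1) := by rw [hu]; abel
  rw [hxk1] at T2
  have hgv : ⟪g, v⟫ = ε * G := by
    rw [hv, real_inner_smul_right, real_inner_self_eq_norm_sq]
    field_simp
    ring
  have hinner : ε * G - 2 * (M * ε ^ 2) ≤ ⟪g, u⟫ := by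
    rw [abs_le] at T1 T2
    have := T1.1
    have := T2.2
    rw [hgv] at T1
    linarith [T1.1, T2.2]
  have huv : ⟪u, v⟫ = (ε / G) * ⟪g, u⟫ := by
    rw [hv, real_inner_smul_right, real_inner_comm]
  have hsq : ‖u - v‖ ^ 2 ≤ 4 * M * ε ^ 3 / G := by
    have hexp : ‖u - v‖ ^ 2 = ‖u‖ ^ 2 - 2 * ⟪u, v⟫ + ‖v‖ ^ 2 := norm_sub_sq_real u v
    rw [hexp, hun, hvn, huv]
    have h5 : (ε / G) * (ε * G - 2 * (M * ε ^ 2)) ≤ (ε / G) * ⟪g, u⟫ :=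
      mul_le_mul_of_nonneg_left hinner (le_of_lt (div_pos hε hG))
    have h6 : (ε / G) * (ε * G - 2 * (M * ε ^ 2)) = ε ^ 2 - 2 * M * ε ^ 3 / G := by
      field_simp
    rw [h6] at h5
    have h7 : 4 * M * ε ^ 3 / G = 2 * (2 * M * ε ^ 3 / G) := by ring
    linarith
  have hRnn : 0 ≤ C₀ * ε ^ ((3:ℝ)/2) / G ^ ((1:ℝ)/2) := by positivity
  have hR : (C₀ * ε ^ ((3:ℝ)/2) / G ^ ((1:ℝ)/2)) ^ 2 = C₀ ^ 2 * ε ^ 3 / G := by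
    rw [div_pow, mul_pow]
    congr 1
    · congr 1
      rw [← Real.rpow_natCast (ε ^ ((3:ℝ)/2)) 2, ← Real.rpow_mul hε.le]
      norm_num
    · rw [← Real.rpow_natCast (G ^ ((1:ℝ)/2)) 2, ← Real.rpow_mul hG.le]
      norm_num
  have hsq2 : ‖u - v‖ ^ 2 ≤ (C₀ * ε ^ ((3:ℝ)/2) / G ^ ((1:ℝ)/2)) ^ 2 := by
    rw [hR]
    apply le_trans hsq
    gcongr
  calc ‖u - v‖ = Real.sqrt (‖u - v‖ ^ 2) := (Real.sqrt_sq (norm_nonneg _)).symm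
    _ ≤ Real.sqrt ((C₀ * ε ^ ((3:ℝ)/2) / G ^ ((1:ℝ)/2)) ^ 2) := Real.sqrt_le_sqrt hsq2
    _ = C₀ * ε ^ ((3:ℝ)/2) / G ^ ((1:ℝ)/2) := Real.sqrt_sq hRnn
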